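/- Let R be a commutative ring and consider the polynomial ring R[t, s] in two variables. The set A = {f ∈ R[t, s] : f(T, 0) = f(0, T) in R[T]} (where f(T,0) and f(0,T) denote the one-variable polynomials obtained by the substitutions s = 0 and t = 0, T being the remaining variable) is an R-subalgebra of R[t, s], and it is generated as an R-algebra by the three elements f₁ = t + s, f₂ = t·s, and f₃ = t²·s; that is, A = Algebra.adjoin R {t + s, t·s, t²·s}. -/

import Mathlib

open MvPolynomial

section NodalP1Aux

variable {R : Type*} [CommRing R]

/-- The target subalgebra. -/
noncomputable def nodalS (R : Type*) [CommRing R] : Subalgebra R (MvPolynomial (Fin 2) R) :=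
  Algebra.adjoin R {(X 0 + X 1 : MvPolynomial (Fin 2) R), X 0 * X 1, (X 0) ^ 2 * X 1}

lemma nodal_gen1 : (X 0 + X 1 : MvPolynomial (Fin 2) R) ∈ nodalS R :=
  Algebra.subset_adjoin (by simp)

lemma nodal_gen2 : (X 0 * X 1 : MvPolynomial (Fin 2) R) ∈ nodalS R :=
  Algebra.subset_adjoin (by simp)

lemma nodal_gen3 : ((X 0) ^ 2 * X 1 : MvPolynomial (Fin 2) R) ∈ nodalS R :=
  Algebra.subset_adjoin (by simp)

lemma nodal_pow_add_pow_mem (n : ℕ) :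
    (X 0 : MvPolynomial (Fin 2) R) ^ n + (X 1) ^ n ∈ nodalS R := by
  induction n using Nat.strong_induction_on with
  | _ n ih =>
    match n with
    | 0 => simpa using add_mem (nodalS R).one_mem (nodalS R).one_mem
    | 1 => simpa using nodal_gen1
    | (k + 2) =>
      have h1 := ih (k + 1) (by omega)
      have h0 := ih k (by omega)
      have key : (X 0 : MvPolynomial (Fin 2) R) ^ (k + 2) + (X 1) ^ (k + 2) =
          (X 0 + X 1) * ((X 0) ^ (k + 1) + (X 1) ^ (k + 1)) -
            (X 0 * X 1) * ((X 0) ^ k + (X 1) ^ k) := by ring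
      rw [key]
      exact sub_mem (mul_mem nodal_gen1 h1) (mul_mem nodal_gen2 h0)

lemma nodal_q_mem (a : ℕ) :
    (X 0 : MvPolynomial (Fin 2) R) ^ (a + 1) * X 1 ∈ nodalS R := by
  induction a using Nat.strong_induction_on with
  | _ a ih =>
    match a with
    | 0 => simpa using nodal_gen2
    | 1 => simpa using nodal_gen3
    | (k + 2) =>
      have h1 := ih (k + 1) (by omega)
      have h0 := ih k (by omega)
      have key : (X 0 : MvPolynomial (Fin 2) R) ^ (k + 3) * X 1 =
          (X 0 + X 1) * ((X 0) ^ (k + 2) * X 1) -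
            (X 0 * X 1) * ((X 0) ^ (k + 1) * X 1) := by ring
      rw [show k + 2 + 1 = k + 3 from rfl, key]
      exact sub_mem (mul_mem nodal_gen1 h1) (mul_mem nodal_gen2 h0)

lemma nodal_r_mem (b : ℕ) :
    (X 0 : MvPolynomial (Fin 2) R) * X 1 ^ (b + 1) ∈ nodalS R := by
  induction b using Nat.strong_induction_on with
  | _ b ih =>
    match b with
    | 0 => simpa using nodal_gen2
    | 1 =>
      have key : (X 0 : MvPolynomial (Fin 2) R) * X 1 ^ 2 =
          (X 0 + X 1) * (X 0 * X 1) - (X 0) ^ 2 * X 1 := by ring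
      rw [key]
      exact sub_mem (mul_mem nodal_gen1 nodal_gen2) nodal_gen3
    | (k + 2) =>
      have h1 := ih (k + 1) (by omega)
      have h0 := ih k (by omega)
      have key : (X 0 : MvPolynomial (Fin 2) R) * X 1 ^ (k + 3) =
          (X 0 + X 1) * (X 0 * X 1 ^ (k + 2)) -
            (X 0 * X 1) * (X 0 * X 1 ^ (k + 1)) := by ring
      rw [show k + 2 + 1 = k + 3 from rfl, key]
      exact sub_mem (mul_mem nodal_gen1 h1) (mul_mem nodal_gen2 h0)

lemma nodal_mixed_mem (a b : ℕ) :
    (X 0 : MvPolynomial (Fin 2) R) ^ (a + 1) * X 1 ^ (b + 1) ∈ nodalS R := by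
  rcases le_total a b with h | h
  · obtain ⟨c, rfl⟩ := Nat.exists_eq_add_of_le h
    have key : (X 0 : MvPolynomial (Fin 2) R) ^ (a + 1) * X 1 ^ (a + c + 1) =
        (X 0 * X 1) ^ a * (X 0 * X 1 ^ (c + 1)) := by ring
    rw [key]
    exact mul_mem (pow_mem nodal_gen2 a) (nodal_r_mem c)
  · obtain ⟨c, rfl⟩ := Nat.exists_eq_add_of_le h
    have key : (X 0 : MvPolynomial (Fin 2) R) ^ (b + c + 1) * X 1 ^ (b + 1) =
        (X 0 * X 1) ^ b * (X 0 ^ (c + 1) * X 1) := by ring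
    rw [key]
    exact mul_mem (pow_mem nodal_gen2 b) (nodal_q_mem c)

lemma nodal_single0 (d : Fin 2 →₀ ℕ) (hd : d 1 = 0) : d = Finsupp.single 0 (d 0) := by
  ext i
  fin_cases i <;> simp [hd]

lemma nodal_single1 (d : Fin 2 →₀ ℕ) (hd : d 0 = 0) : d = Finsupp.single 1 (d 1) := by
  ext i
  fin_cases i <;> simp [hd]

lemma nodal_coeff_aeval0 (f : MvPolynomial (Fin 2) R) (n : ℕ) :
    (MvPolynomial.aeval ![(Polynomial.X : Polynomial R), 0] f).coeff n =
      MvPolynomial.coeff (Finsupp.single 0 n) f := by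
  induction f using MvPolynomial.induction_on' with
  | monomial d c =>
    rw [aeval_monomial, Finsupp.prod_pow, Fin.prod_univ_two]
    simp only [Matrix.cons_val_zero, Matrix.cons_val_one, Matrix.head_cons]
    by_cases hd : d 1 = 0
    · rw [hd, pow_zero, mul_one, MvPolynomial.coeff_monomial]
      simp only [Polynomial.algebraMap_eq, Polynomial.coeff_C_mul, Polynomial.coeff_X_pow]
      rw [nodal_single0 d hd]
      have h1 : ((Finsupp.single 0 (d 0) : Fin 2 →₀ ℕ) = Finsupp.single 0 n) ↔ d 0 = n :=
        (Finsupp.single_injective (0 : Fin 2)).eq_iff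
      by_cases h0 : d 0 = n
      · simp [h0]
      · simp [h1, h0, Ne.symm h0]
    · rw [zero_pow hd]
      simp only [mul_zero, Polynomial.coeff_zero, MvPolynomial.coeff_monomial]
      rw [if_neg]
      intro h
      apply hd
      have := congrArg (fun e => e 1) h
      simpa using this
  | add p q hp hq =>
    simp [map_add, hp, hq]

lemma nodal_coeff_aeval1 (f : MvPolynomial (Fin 2) R) (n : ℕ) :
    (MvPolynomial.aeval ![0, (Polynomial.X : Polynomial R)] f).coeff n =
      MvPolynomial.coeff (Finsupp.single 1 n) f := by
  induction f using MvPolynomial.induction_on' with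
  | monomial d c =>
    rw [aeval_monomial, Finsupp.prod_pow, Fin.prod_univ_two]
    simp only [Matrix.cons_val_zero, Matrix.cons_val_one, Matrix.head_cons]
    by_cases hd : d 0 = 0
    · rw [hd, pow_zero, one_mul, MvPolynomial.coeff_monomial]
      simp only [Polynomial.algebraMap_eq, Polynomial.coeff_C_mul, Polynomial.coeff_X_pow]
      rw [nodal_single1 d hd]
      have h1 : ((Finsupp.single 1 (d 1) : Fin 2 →₀ ℕ) = Finsupp.single 1 n) ↔ d 1 = n :=
        (Finsupp.single_injective (1 : Fin 2)).eq_iff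
      by_cases h0 : d 1 = n
      · simp [h0]
      · simp [h1, h0, Ne.symm h0]
    · rw [zero_pow hd]
      simp only [zero_mul, mul_zero, Polynomial.coeff_zero, MvPolynomial.coeff_monomial]
      rw [if_neg]
      intro h
      apply hd
      have := congrArg (fun e => e 0) h
      simpa using this
  | add p q hp hq =>
    simp [map_add, hp, hq]

end NodalP1Aux

/-- The homogeneous coordinate ring of ℙ¹ with 0 and ∞ identified: the
subalgebra {f ∈ R[t,s] : f(T,0) = f(0,T)} of R[t,s] is generated over R by
t + s, t·s and t²·s. -/
theorem nodal_P1_coordinate_ring (R : Type*) [CommRing R] :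
    {f : MvPolynomial (Fin 2) R |
        MvPolynomial.aeval ![(Polynomial.X : Polynomial R), 0] f =
          MvPolynomial.aeval ![0, (Polynomial.X : Polynomial R)] f} =
      (Algebra.adjoin R
        {(X 0 + X 1 : MvPolynomial (Fin 2) R), X 0 * X 1, (X 0) ^ 2 * X 1} :
        Subalgebra R (MvPolynomial (Fin 2) R)) := by
  ext f
  simp only [Set.mem_setOf_eq, SetLike.mem_coe]
  constructor
  · intro h
    show f ∈ nodalS R
    set P : Polynomial R := MvPolynomial.aeval ![(Polynomial.X : Polynomial R), 0] f with hP
    have hc0 : ∀ n, MvPolynomial.coeff (Finsupp.single 0 n) f = P.coeff n := by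
      intro n
      rw [← nodal_coeff_aeval0, hP]
    have hc1 : ∀ n, MvPolynomial.coeff (Finsupp.single 1 n) f = P.coeff n := by
      intro n
      rw [← nodal_coeff_aeval1, ← h]
    set g : MvPolynomial (Fin 2) R :=
      C (P.coeff 0) + ∑ k ∈ P.support.erase 0,
        C (P.coeff k) * ((X 0) ^ k + (X 1) ^ k) with hg
    have hgmem : g ∈ nodalS R := by
      refine add_mem ?_ (sum_mem fun k _ => ?_)
      · exact (nodalS R).algebraMap_mem _
      · exact mul_mem ((nodalS R).algebraMap_mem _) (nodal_pow_add_pow_mem k)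
    -- coefficient of single 0 n in g
    have hterm0 : ∀ n, ∀ k ∈ P.support.erase 0,
        MvPolynomial.coeff (Finsupp.single (0 : Fin 2) n)
            (C (P.coeff k) * ((X 0) ^ k + (X 1) ^ k) : MvPolynomial (Fin 2) R) =
          if k = n then P.coeff k else 0 := by
      intro n k hk
      have hk0 : k ≠ 0 := Finset.ne_of_mem_erase hk
      rw [MvPolynomial.coeff_C_mul, MvPolynomial.coeff_add, MvPolynomial.X_pow_eq_monomial,
        MvPolynomial.X_pow_eq_monomial, MvPolynomial.coeff_monomial,
        MvPolynomial.coeff_monomial]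
      have h2 : ¬ ((Finsupp.single 1 k : Fin 2 →₀ ℕ) = Finsupp.single 0 n) := by
        intro hsk
        apply hk0
        have := congrArg (fun e => e 1) hsk
        simpa using this
      have h1 : ((Finsupp.single 0 k : Fin 2 →₀ ℕ) = Finsupp.single 0 n) ↔ k = n :=
        (Finsupp.single_injective (0 : Fin 2)).eq_iff
      by_cases h0 : k = n
      · subst h0
        simp [Finsupp.single_eq_single_iff, hk0]
      · simp [Finsupp.single_eq_single_iff, hk0, h0]
    have hterm1 : ∀ n, ∀ k ∈ P.support.erase 0,
        MvPolynomial.coeff (Finsupp.single (1 : Fin 2) n)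
            (C (P.coeff k) * ((X 0) ^ k + (X 1) ^ k) : MvPolynomial (Fin 2) R) =
          if k = n then P.coeff k else 0 := by
      intro n k hk
      have hk0 : k ≠ 0 := Finset.ne_of_mem_erase hk
      rw [MvPolynomial.coeff_C_mul, MvPolynomial.coeff_add, MvPolynomial.X_pow_eq_monomial,
        MvPolynomial.X_pow_eq_monomial, MvPolynomial.coeff_monomial,
        MvPolynomial.coeff_monomial]
      have h2 : ¬ ((Finsupp.single 0 k : Fin 2 →₀ ℕ) = Finsupp.single 1 n) := by
        intro hsk
        apply hk0
        have := congrArg (fun e => e 0) hsk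
        simpa using this
      have h1 : ((Finsupp.single 1 k : Fin 2 →₀ ℕ) = Finsupp.single 1 n) ↔ k = n :=
        (Finsupp.single_injective (1 : Fin 2)).eq_iff
      by_cases h0 : k = n
      · subst h0
        simp [Finsupp.single_eq_single_iff, hk0]
      · simp [Finsupp.single_eq_single_iff, hk0, h0]
    have hCcoeff0 : ∀ n, MvPolynomial.coeff (Finsupp.single (0 : Fin 2) n) (C (P.coeff 0) : MvPolynomial (Fin 2) R) =
        if n = 0 then P.coeff 0 else 0 := by
      intro n
      rw [MvPolynomial.coeff_C]
      by_cases hn : n = 0 <;> simp [hn, Finsupp.single_eq_zero, eq_comm]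
    have hCcoeff1 : ∀ n, MvPolynomial.coeff (Finsupp.single (1 : Fin 2) n) (C (P.coeff 0) : MvPolynomial (Fin 2) R) =
        if n = 0 then P.coeff 0 else 0 := by
      intro n
      rw [MvPolynomial.coeff_C]
      by_cases hn : n = 0 <;> simp [hn, Finsupp.single_eq_zero, eq_comm]
    have hsum : ∀ n, (if n = 0 then P.coeff 0 else 0) +
        (if n ∈ P.support.erase 0 then P.coeff n else 0) = P.coeff n := by
      intro n
      by_cases hn : n = 0
      · simp [hn]
      · rw [if_neg hn, zero_add]
        by_cases hns : n ∈ P.support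
        · rw [if_pos (Finset.mem_erase.mpr ⟨hn, hns⟩)]
        · rw [if_neg (fun hc => hns (Finset.mem_of_mem_erase hc)),
            Polynomial.notMem_support_iff.mp hns]
    have hcoeffg0 : ∀ n, MvPolynomial.coeff (Finsupp.single 0 n) g = P.coeff n := by
      intro n
      rw [hg, MvPolynomial.coeff_add, MvPolynomial.coeff_sum]
      simp only [hCcoeff0]
      by_cases hn : n ∈ P.support.erase 0
      · rw [Finset.sum_eq_single_of_mem n hn fun k hk hkn => by
          have hh := hterm0 n k hk
          rwa [if_neg hkn] at hh]
        have hh := hterm0 n n hn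
        rw [if_pos rfl] at hh
        simp only [hh]
        rw [if_neg (Finset.ne_of_mem_erase hn), zero_add]
      · rw [Finset.sum_eq_zero fun k hk => by
          have hkn : k ≠ n := fun e => hn (e ▸ hk)
          have hh := hterm0 n k hk
          rwa [if_neg hkn] at hh]
        rw [add_zero]
        by_cases hn0 : n = 0
        · subst hn0
          simp
        · rw [if_neg hn0]
          have hns : n ∉ P.support := fun hs => hn (Finset.mem_erase.mpr ⟨hn0, hs⟩)
          exact (Polynomial.notMem_support_iff.mp hns).symm
    have hcoeffg1 : ∀ n, MvPolynomial.coeff (Finsupp.single 1 n) g = P.coeff n := by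
      intro n
      rw [hg, MvPolynomial.coeff_add, MvPolynomial.coeff_sum]
      simp only [hCcoeff1]
      by_cases hn : n ∈ P.support.erase 0
      · rw [Finset.sum_eq_single_of_mem n hn fun k hk hkn => by
          have hh := hterm1 n k hk
          rwa [if_neg hkn] at hh]
        have hh := hterm1 n n hn
        rw [if_pos rfl] at hh
        simp only [hh]
        rw [if_neg (Finset.ne_of_mem_erase hn), zero_add]
      · rw [Finset.sum_eq_zero fun k hk => by
          have hkn : k ≠ n := fun e => hn (e ▸ hk)
          have hh := hterm1 n k hk
          rwa [if_neg hkn] at hh]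
        rw [add_zero]
        by_cases hn0 : n = 0
        · subst hn0
          simp
        · rw [if_neg hn0]
          have hns : n ∉ P.support := fun hs => hn (Finset.mem_erase.mpr ⟨hn0, hs⟩)
          exact (Polynomial.notMem_support_iff.mp hns).symm
    have hsub0 : ∀ n, MvPolynomial.coeff (Finsupp.single 0 n) (f - g) = 0 := by
      intro n
      rw [MvPolynomial.coeff_sub, hc0, hcoeffg0, sub_self]
    have hsub1 : ∀ n, MvPolynomial.coeff (Finsupp.single 1 n) (f - g) = 0 := by
      intro n
      rw [MvPolynomial.coeff_sub, hc1, hcoeffg1, sub_self]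
    have key : f = g + (f - g) := by ring
    rw [key]
    refine add_mem hgmem ?_
    rw [(f - g).as_sum]
    refine sum_mem fun m hm => ?_
    have hm0 : m 0 ≠ 0 := by
      intro h0
      apply MvPolynomial.mem_support_iff.mp hm
      rw [nodal_single1 m h0]
      exact hsub1 (m 1)
    have hm1 : m 1 ≠ 0 := by
      intro h1
      apply MvPolynomial.mem_support_iff.mp hm
      rw [nodal_single0 m h1]
      exact hsub0 (m 0)
    obtain ⟨a, ha⟩ := Nat.exists_eq_succ_of_ne_zero hm0
    obtain ⟨b, hb⟩ := Nat.exists_eq_succ_of_ne_zero hm1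
    rw [MvPolynomial.monomial_eq, Finsupp.prod_pow, Fin.prod_univ_two, ha, hb]
    have hC : (C (MvPolynomial.coeff m (f - g)) : MvPolynomial (Fin 2) R) ∈ nodalS R := by
      rw [← MvPolynomial.algebraMap_eq]
      exact (nodalS R).algebraMap_mem _
    exact mul_mem hC (nodal_mixed_mem a b)
  · intro hf
    have hle : Algebra.adjoin R
        {(X 0 + X 1 : MvPolynomial (Fin 2) R), X 0 * X 1, (X 0) ^ 2 * X 1} ≤
        AlgHom.equalizer (MvPolynomial.aeval ![(Polynomial.X : Polynomial R), 0])
          (MvPolynomial.aeval ![0, (Polynomial.X : Polynomial R)]) := by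
      rw [Algebra.adjoin_le_iff]
      rintro x (rfl | rfl | rfl) <;>
        simp [AlgHom.mem_equalizer]
    exact hle hf
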